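/- Let G be a connected graph with adjacency eigenvalues λ₁ ≥ ⋯ ≥ λₙ, λ = max{|λ₂|,|λₙ|}, and normalized Perron eigenvector ν. Suppose P = {C₁,…,C_m} is an equitable partition of G and S ⊆ C_i, T ⊆ C_j for some i, j. Then, with ν_S and ν_T the constant values of ν on C_i and C_j respectively, |e(S,T) − λ₁|S||T|ν_Sν_T| ≤ λ·sqrt(|S||T|(1 − |S|ν_S²)(1 − |T|ν_T²)). -/

import Mathlib

open Matrix Finset
open scoped RealInnerProductSpace

set_option linter.unusedVariables false


lemma prop_zero {n : ℕ} (G : SimpleGraph (Fin n)) [DecidableRel G.Adj] (hG : G.Connected)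
    (A : Matrix (Fin n) (Fin n) ℝ) (hA : A = G.adjMatrix ℝ)
    (lam1 : ℝ) (hpos : 0 < lam1) (z : Fin n → ℝ) (hz : A *ᵥ z = lam1 • z)
    (hznn : ∀ u, 0 ≤ z u) (u0 : Fin n) (h0 : z u0 = 0) : ∀ v, z v = 0 := by
  have key : ∀ u v, z u = 0 → G.Adj u v → z v = 0 := by
    intro u v hu huv
    have h1 : (A *ᵥ z) u = 0 := by rw [hz]; simp [hu]
    rw [hA] at h1
    have h2 : ∑ w, (G.adjMatrix ℝ) u w * z w = 0 := h1
    have h3 : ∀ w ∈ Finset.univ, (0:ℝ) ≤ (G.adjMatrix ℝ) u w * z w := by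
      intro w _
      exact mul_nonneg (by simp [SimpleGraph.adjMatrix]; positivity) (hznn w)
    have h4 := (Finset.sum_eq_zero_iff_of_nonneg h3).mp h2 v (Finset.mem_univ v)
    simpa [SimpleGraph.adjMatrix, huv] using h4
  have key2 : ∀ u v (w : G.Walk u v), z u = 0 → z v = 0 := by
    intro u v w
    induction w with
    | nil => exact id
    | cons h p ih => exact fun hu => ih (key _ _ hu h)
  intro v
  obtain ⟨w⟩ := hG.preconnected u0 v
  exact key2 _ _ w h0


lemma lam1_pos {n : ℕ} (hn : 2 ≤ n) (G : SimpleGraph (Fin n)) [DecidableRel G.Adj]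
    (hG : G.Connected) (A : Matrix (Fin n) (Fin n) ℝ) (hA : A = G.adjMatrix ℝ)
    (ν : Fin n → ℝ) (hνpos : ∀ i, 0 < ν i) (lam1 : ℝ)
    (hνeig : A *ᵥ ν = lam1 • ν) : 0 < lam1 := by
  have hne : ((⟨0, by omega⟩ : Fin n) : Fin n) ≠ ⟨1, by omega⟩ := by
    simp [Fin.ext_iff]
  obtain ⟨w⟩ := hG.preconnected ⟨0, by omega⟩ ⟨1, by omega⟩
  obtain ⟨v, hadj⟩ : ∃ v, G.Adj ⟨0, by omega⟩ v := by
    cases w with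
    | cons h p => exact ⟨_, h⟩
  set u : Fin n := ⟨0, by omega⟩
  have h1 : (A *ᵥ ν) u = lam1 * ν u := by rw [hνeig]; rfl
  have h2 : 0 < (A *ᵥ ν) u := by
    rw [hA]
    have : ((G.adjMatrix ℝ) *ᵥ ν) u = ∑ w, (G.adjMatrix ℝ) u w * ν w := rfl
    rw [this]
    apply Finset.sum_pos'
    · intro w _
      exact mul_nonneg (by simp [SimpleGraph.adjMatrix]; positivity) (hνpos w).le
    · exact ⟨v, Finset.mem_univ v, by simp [SimpleGraph.adjMatrix, hadj, hνpos v]⟩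
  rw [h1] at h2
  nlinarith [hνpos u]

lemma perron_simple {n : ℕ} (hn : 2 ≤ n) (G : SimpleGraph (Fin n)) [DecidableRel G.Adj]
    (hG : G.Connected) (A : Matrix (Fin n) (Fin n) ℝ) (hA : A = G.adjMatrix ℝ)
    (ν : Fin n → ℝ) (hνpos : ∀ i, 0 < ν i) (hνnorm : ∑ i, ν i ^ 2 = 1)
    (lam1 : ℝ) (hpos : 0 < lam1) (hνeig : A *ᵥ ν = lam1 • ν)
    (w : Fin n → ℝ) (hw : A *ᵥ w = lam1 • w) (hperp : w ⬝ᵥ ν = 0) : w = 0 := by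
  have hnon : (Finset.univ : Finset (Fin n)).Nonempty := ⟨⟨0, by omega⟩, Finset.mem_univ _⟩
  obtain ⟨u0, _, hu0⟩ := Finset.exists_min_image Finset.univ (fun u => w u / ν u) hnon
  set t : ℝ := w u0 / ν u0 with ht
  set z : Fin n → ℝ := w - t • ν with hzdef
  have hz : A *ᵥ z = lam1 • z := by
    rw [hzdef, Matrix.mulVec_sub, Matrix.mulVec_smul, hw, hνeig, smul_sub, smul_comm]
  have hznn : ∀ u, 0 ≤ z u := by
    intro u
    have h1 : t ≤ w u / ν u := hu0 u (Finset.mem_univ u)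
    have h2 := hνpos u
    have : t * ν u ≤ w u := (le_div_iff₀ h2).mp h1
    simpa [hzdef] using by linarith
  have h0 : z u0 = 0 := by
    simp only [hzdef, Pi.sub_apply, Pi.smul_apply, smul_eq_mul, ht]
    rw [div_mul_cancel₀ _ (hνpos u0).ne', sub_self]
  have hz0 : ∀ v, z v = 0 := prop_zero G hG A hA lam1 hpos z hz hznn u0 h0
  have hwt : w = t • ν := by
    funext v
    have := hz0 v
    simp only [hzdef, Pi.sub_apply, Pi.smul_apply, smul_eq_mul] at this
    simpa [sub_eq_zero] using this
  have hνν : ν ⬝ᵥ ν = 1 := by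
    rw [← hνnorm]; simp [dotProduct, sq]
  have : t = 0 := by
    have := hperp
    rw [hwt] at this
    simpa [smul_dotProduct, hνν] using this
  rw [hwt, this, zero_smul]

noncomputable def toE {n : ℕ} : (Fin n → ℝ) → EuclideanSpace ℝ (Fin n) := fun f => WithLp.toLp 2 f

lemma bilinear_bound {n : ℕ} (A : Matrix (Fin n) (Fin n) ℝ) (hAH : A.IsHermitian)
    (hsym : ∀ f g : Fin n → ℝ, f ⬝ᵥ (A *ᵥ g) = (A *ᵥ f) ⬝ᵥ g)
    (ν : Fin n → ℝ) (hνν : ν ⬝ᵥ ν = 1)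
    (lam0 lamAbs : ℝ) (hνeig : A *ᵥ ν = lam0 • ν) (hlamAbsnn : 0 ≤ lamAbs)
    (hcase : ∀ k : Fin n, hAH.eigenvalues k = lam0 ∨ |hAH.eigenvalues k| ≤ lamAbs)
    (hsimple : ∀ w : Fin n → ℝ, A *ᵥ w = lam0 • w → w ⬝ᵥ ν = 0 → w = 0)
    (x y : Fin n → ℝ) (hx : x ⬝ᵥ ν = 0) (hy : y ⬝ᵥ ν = 0) :
    |x ⬝ᵥ (A *ᵥ y)| ≤ lamAbs * (Real.sqrt (x ⬝ᵥ x) * Real.sqrt (y ⬝ᵥ y)) := by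
  set b := hAH.eigenvectorBasis with hb
  have inner_dot : ∀ f g : Fin n → ℝ, ⟪toE f, toE g⟫ = f ⬝ᵥ g := by
    intro f g
    simp only [PiLp.inner_apply, RCLike.inner_apply, conj_trivial]
    rw [dotProduct]; exact Finset.sum_congr rfl fun i _ => mul_comm _ _
  have hbr : ∀ (k : Fin n) (f : Fin n → ℝ), ⟪b k, toE f⟫ = ⇑(b k) ⬝ᵥ f := by
    intro k f; exact inner_dot (⇑(b k)) f
  have hbr2 : ∀ (f : Fin n → ℝ) (k : Fin n), ⟪toE f, b k⟫ = ⇑(b k) ⬝ᵥ f := by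
    intro f k; rw [real_inner_comm]; exact hbr k f
  -- expansion
  have expand : ∀ f g : Fin n → ℝ,
      f ⬝ᵥ g = ∑ k, (⇑(b k) ⬝ᵥ f) * (⇑(b k) ⬝ᵥ g) := by
    intro f g
    calc f ⬝ᵥ g = ⟪toE f, toE g⟫ := (inner_dot f g).symm
      _ = ∑ k, ⟪toE f, b k⟫ * ⟪b k, toE g⟫ := (b.sum_inner_mul_inner _ _).symm
      _ = ∑ k, (⇑(b k) ⬝ᵥ f) * (⇑(b k) ⬝ᵥ g) :=
        Finset.sum_congr rfl fun k _ => congrArg₂ (· * ·) (hbr2 f k) (hbr k g)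
  have hbeig : ∀ k (g : Fin n → ℝ), ⇑(b k) ⬝ᵥ (A *ᵥ g) = hAH.eigenvalues k * (⇑(b k) ⬝ᵥ g) := by
    intro k g
    rw [hsym, hAH.mulVec_eigenvectorBasis, smul_dotProduct]
    rfl
  have key : x ⬝ᵥ (A *ᵥ y) = ∑ k, hAH.eigenvalues k * ((⇑(b k) ⬝ᵥ x) * (⇑(b k) ⬝ᵥ y)) := by
    rw [expand x (A *ᵥ y)]
    congr 1; funext k
    rw [hbeig k]; ring
  -- per-term bound
  have hterm : ∀ k, |hAH.eigenvalues k * ((⇑(b k) ⬝ᵥ x) * (⇑(b k) ⬝ᵥ y))|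
      ≤ lamAbs * (|⇑(b k) ⬝ᵥ x| * |⇑(b k) ⬝ᵥ y|) := by
    intro k
    rcases hcase k with h | h
    · -- eigenvalue = lam0 : show the dot products vanish
      have hw : A *ᵥ (⇑(b k) - (⇑(b k) ⬝ᵥ ν) • ν) = lam0 • (⇑(b k) - (⇑(b k) ⬝ᵥ ν) • ν) := by
        rw [Matrix.mulVec_sub, Matrix.mulVec_smul, hAH.mulVec_eigenvectorBasis, h, hνeig,
          smul_sub, smul_comm]
      have hperp : (⇑(b k) - (⇑(b k) ⬝ᵥ ν) • ν) ⬝ᵥ ν = 0 := by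
        rw [sub_dotProduct, smul_dotProduct, hνν]
        simp
      have h0 := hsimple _ hw hperp
      have hbk : (⇑(b k) : Fin n → ℝ) = (⇑(b k) ⬝ᵥ ν) • ν := sub_eq_zero.mp h0
      have hzero : ⇑(b k) ⬝ᵥ x = 0 := by
        rw [hbk, smul_dotProduct]
        have hh : ν ⬝ᵥ x = 0 := by rw [dotProduct_comm]; exact hx
        rw [hh]; simp
      rw [hzero]
      simp only [mul_zero, zero_mul, abs_zero]
      positivity
    · rw [abs_mul, abs_mul]
      apply mul_le_mul_of_nonneg_right h
      positivity
  -- Cauchy–Schwarz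
  have hx2 : ∑ k, (⇑(b k) ⬝ᵥ x) ^ 2 = x ⬝ᵥ x := by
    rw [expand x x]; congr 1; funext k; ring
  have hy2 : ∑ k, (⇑(b k) ⬝ᵥ y) ^ 2 = y ⬝ᵥ y := by
    rw [expand y y]; congr 1; funext k; ring
  have hCS : ∑ k, |⇑(b k) ⬝ᵥ x| * |⇑(b k) ⬝ᵥ y| ≤ Real.sqrt (x ⬝ᵥ x) * Real.sqrt (y ⬝ᵥ y) := by
    have h1 := Finset.sum_mul_sq_le_sq_mul_sq Finset.univ (fun k => |⇑(b k) ⬝ᵥ x|) (fun k => |⇑(b k) ⬝ᵥ y|)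
    have h2 : (∑ k, |⇑(b k) ⬝ᵥ x| ^ 2) = x ⬝ᵥ x := by
      rw [← hx2]; congr 1; funext k; rw [sq_abs]
    have h3 : (∑ k, |⇑(b k) ⬝ᵥ y| ^ 2) = y ⬝ᵥ y := by
      rw [← hy2]; congr 1; funext k; rw [sq_abs]
    rw [h2, h3] at h1
    have h4 : (0:ℝ) ≤ ∑ k, |⇑(b k) ⬝ᵥ x| * |⇑(b k) ⬝ᵥ y| := by positivity
    have h5 := Real.sqrt_le_sqrt h1
    rwa [Real.sqrt_sq h4, Real.sqrt_mul (by rw [← h2]; positivity)] at h5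
  calc |x ⬝ᵥ (A *ᵥ y)| ≤ ∑ k, |hAH.eigenvalues k * ((⇑(b k) ⬝ᵥ x) * (⇑(b k) ⬝ᵥ y))| := by
        rw [key]; exact Finset.abs_sum_le_sum_abs _ _
    _ ≤ ∑ k, lamAbs * (|⇑(b k) ⬝ᵥ x| * |⇑(b k) ⬝ᵥ y|) := Finset.sum_le_sum fun k _ => hterm k
    _ = lamAbs * ∑ k, |⇑(b k) ⬝ᵥ x| * |⇑(b k) ⬝ᵥ y| := by rw [Finset.mul_sum]
    _ ≤ lamAbs * (Real.sqrt (x ⬝ᵥ x) * Real.sqrt (y ⬝ᵥ y)) :=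
        mul_le_mul_of_nonneg_left hCS hlamAbsnn

/-- **Perron EML for sets inside cells of an equitable partition.**
`part : Fin n → Fin m` assigns each vertex its cell; the partition is equitable if
any two vertices in the same cell have the same number of neighbours in each cell.
The Perron eigenvector is then constant on cells, with values `νS` on the cell of `S`
and `νT` on the cell of `T`. -/
theorem perron_eml_equitable {n m : ℕ} (hn : 2 ≤ n)
    (G : SimpleGraph (Fin n)) [DecidableRel G.Adj] (hG : G.Connected)
    (A : Matrix (Fin n) (Fin n) ℝ) (hA : A = G.adjMatrix ℝ)
    (hAH : A.IsHermitian)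
    (lam : Fin n → ℝ) (hmono : Antitone lam)
    (heig : ∃ e : Fin n ≃ Fin n, ∀ i, lam i = hAH.eigenvalues (e i))
    (ν : Fin n → ℝ) (hνpos : ∀ i, 0 < ν i) (hνnorm : ∑ i, ν i ^ 2 = 1)
    (hνeig : A *ᵥ ν = lam ⟨0, by omega⟩ • ν)
    (lamAbs : ℝ)
    (hlamAbs : lamAbs = max |lam ⟨1, by omega⟩| |lam ⟨n - 1, by omega⟩|)
    (part : Fin n → Fin m)
    (hequit : ∀ (j : Fin m) (u v : Fin n), part u = part v →
      ((G.neighborFinset u).filter fun w => part w = j).card =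
        ((G.neighborFinset v).filter fun w => part w = j).card)
    (i j : Fin m) (S T : Finset (Fin n))
    (hS : ∀ u ∈ S, part u = i) (hT : ∀ u ∈ T, part u = j)
    (νS νT : ℝ)
    (hνS : ∀ u, part u = i → ν u = νS) (hνT : ∀ u, part u = j → ν u = νT) :
    |(fun u => if u ∈ S then (1 : ℝ) else 0) ⬝ᵥ
        (A *ᵥ fun u => if u ∈ T then (1 : ℝ) else 0)
      - lam ⟨0, by omega⟩ * S.card * T.card * νS * νT|
      ≤ lamAbs * Real.sqrt ((S.card : ℝ) * T.card *
          (1 - S.card * νS ^ 2) * (1 - T.card * νT ^ 2)) := by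
  set lam0 : ℝ := lam ⟨0, by omega⟩ with hlam0
  set χS : Fin n → ℝ := fun u => if u ∈ S then (1 : ℝ) else 0 with hχS
  set χT : Fin n → ℝ := fun u => if u ∈ T then (1 : ℝ) else 0 with hχT
  have hAT : Aᵀ = A := by rw [hA]; exact SimpleGraph.transpose_adjMatrix G
  have hsym : ∀ f g : Fin n → ℝ, f ⬝ᵥ (A *ᵥ g) = (A *ᵥ f) ⬝ᵥ g := fun f g => by
    rw [Matrix.dotProduct_mulVec, ← Matrix.mulVec_transpose, hAT]
  have hνν : ν ⬝ᵥ ν = 1 := by rw [← hνnorm]; simp [dotProduct, sq]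
  have hpos : 0 < lam0 := lam1_pos hn G hG A hA ν hνpos lam0 hνeig
  have hsimple : ∀ w : Fin n → ℝ, A *ᵥ w = lam0 • w → w ⬝ᵥ ν = 0 → w = 0 :=
    fun w hw hp => perron_simple hn G hG A hA ν hνpos hνnorm lam0 hpos hνeig w hw hp
  have hlamAbsnn : 0 ≤ lamAbs := by
    rw [hlamAbs]; exact le_trans (abs_nonneg _) (le_max_left _ _)
  have hcase : ∀ k : Fin n, hAH.eigenvalues k = lam0 ∨ |hAH.eigenvalues k| ≤ lamAbs := by
    obtain ⟨e, he⟩ := heig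
    intro k
    have hk : hAH.eigenvalues k = lam (e.symm k) := by
      rw [he (e.symm k), e.apply_symm_apply]
    by_cases h : lam (e.symm k) = lam0
    · left; rw [hk, h]
    · right
      have hp0 : e.symm k ≠ ⟨0, by omega⟩ := fun hc => h (by rw [hc])
      have hv : (e.symm k).val ≠ 0 := fun hc => hp0 (Fin.ext hc)
      have hp1 : (⟨1, by omega⟩ : Fin n) ≤ e.symm k := by
        rw [Fin.le_def]; show 1 ≤ (e.symm k).val; omega
      have hpn : e.symm k ≤ ⟨n - 1, by omega⟩ := by
        rw [Fin.le_def]; show (e.symm k).val ≤ n - 1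
        have := (e.symm k).isLt; omega
      have hub : lam (e.symm k) ≤ lam ⟨1, by omega⟩ := hmono hp1
      have hlb : lam ⟨n - 1, by omega⟩ ≤ lam (e.symm k) := hmono hpn
      rw [hk, hlamAbs, abs_le]
      constructor
      · calc -(max |lam ⟨1, by omega⟩| |lam ⟨n-1, by omega⟩|)
            ≤ -|lam ⟨n - 1, by omega⟩| := neg_le_neg (le_max_right _ _)
          _ ≤ lam ⟨n - 1, by omega⟩ := neg_abs_le _
          _ ≤ lam (e.symm k) := hlb
      · exact hub.trans ((le_abs_self _).trans (le_max_left _ _))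
  -- dot product computations
  have hχSν : χS ⬝ᵥ ν = (S.card : ℝ) * νS := by
    rw [dotProduct]
    have h1 : ∀ u, χS u * ν u = if u ∈ S then ν u else 0 := by
      intro u; simp only [hχS]; split <;> simp
    simp_rw [h1]
    rw [Finset.sum_ite_mem, Finset.univ_inter]
    rw [Finset.sum_congr rfl (fun u hu => hνS u (hS u hu)), Finset.sum_const, nsmul_eq_mul]
  have hχTν : χT ⬝ᵥ ν = (T.card : ℝ) * νT := by
    rw [dotProduct]
    have h1 : ∀ u, χT u * ν u = if u ∈ T then ν u else 0 := by
      intro u; simp only [hχT]; split <;> simp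
    simp_rw [h1]
    rw [Finset.sum_ite_mem, Finset.univ_inter]
    rw [Finset.sum_congr rfl (fun u hu => hνT u (hT u hu)), Finset.sum_const, nsmul_eq_mul]
  have hχSS : χS ⬝ᵥ χS = (S.card : ℝ) := by
    rw [dotProduct]
    have h1 : ∀ u, χS u * χS u = if u ∈ S then (1:ℝ) else 0 := by
      intro u; simp only [hχS]; split <;> simp
    simp_rw [h1]
    rw [Finset.sum_ite_mem, Finset.univ_inter, Finset.sum_const, nsmul_eq_mul, mul_one]
  have hχTT : χT ⬝ᵥ χT = (T.card : ℝ) := by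
    rw [dotProduct]
    have h1 : ∀ u, χT u * χT u = if u ∈ T then (1:ℝ) else 0 := by
      intro u; simp only [hχT]; split <;> simp
    simp_rw [h1]
    rw [Finset.sum_ite_mem, Finset.univ_inter, Finset.sum_const, nsmul_eq_mul, mul_one]
  set α : ℝ := (S.card : ℝ) * νS with hα
  set β : ℝ := (T.card : ℝ) * νT with hβ
  set x : Fin n → ℝ := χS - α • ν with hx
  set y : Fin n → ℝ := χT - β • ν with hy
  have hxν : x ⬝ᵥ ν = 0 := by
    rw [hx, sub_dotProduct, smul_dotProduct, hχSν, hνν, smul_eq_mul]; ring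
  have hyν : y ⬝ᵥ ν = 0 := by
    rw [hy, sub_dotProduct, smul_dotProduct, hχTν, hνν, smul_eq_mul]; ring
  have hxx : x ⬝ᵥ x = (S.card : ℝ) * (1 - S.card * νS ^ 2) := by
    rw [hx, sub_dotProduct, dotProduct_sub, dotProduct_sub,
      smul_dotProduct, dotProduct_smul, dotProduct_smul,
      smul_dotProduct, dotProduct_comm ν χS, hχSS, hχSν, hνν]
    simp only [smul_eq_mul, hα]; ring
  have hyy : y ⬝ᵥ y = (T.card : ℝ) * (1 - T.card * νT ^ 2) := by
    rw [hy, sub_dotProduct, dotProduct_sub, dotProduct_sub,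
      smul_dotProduct, dotProduct_smul, dotProduct_smul,
      smul_dotProduct, dotProduct_comm ν χT, hχTT, hχTν, hνν]
    simp only [smul_eq_mul, hβ]; ring
  have hmain : χS ⬝ᵥ (A *ᵥ χT) - lam0 * S.card * T.card * νS * νT = x ⬝ᵥ (A *ᵥ y) := by
    have e1 : A *ᵥ y = A *ᵥ χT - (β * lam0) • ν := by
      rw [hy, Matrix.mulVec_sub, Matrix.mulVec_smul, hνeig, smul_smul]
    have e3 : ν ⬝ᵥ (A *ᵥ χT) = lam0 * β := by
      rw [hsym, hνeig, smul_dotProduct, smul_eq_mul, dotProduct_comm, hχTν]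
    rw [hx, e1]
    simp only [sub_dotProduct, dotProduct_sub, smul_dotProduct,
      dotProduct_smul, smul_eq_mul, e3, hχSν, hνν]
    simp only [hα, hβ]; ring
  have hb := bilinear_bound A hAH hsym ν hνν lam0 lamAbs hνeig hlamAbsnn hcase hsimple
    x y hxν hyν
  rw [hmain]
  have hxxnn : (0:ℝ) ≤ x ⬝ᵥ x := Finset.sum_nonneg fun u _ => mul_self_nonneg _
  have hyynn : (0:ℝ) ≤ y ⬝ᵥ y := Finset.sum_nonneg fun u _ => mul_self_nonneg _
  calc |x ⬝ᵥ (A *ᵥ y)| ≤ lamAbs * (Real.sqrt (x ⬝ᵥ x) * Real.sqrt (y ⬝ᵥ y)) := hb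
    _ = lamAbs * Real.sqrt ((S.card : ℝ) * T.card *
          (1 - S.card * νS ^ 2) * (1 - T.card * νT ^ 2)) := by
        rw [← Real.sqrt_mul hxxnn, hxx, hyy]
        ring_nf
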